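/- Let m ≥ 3, let X_1, …, X_n be i.i.d. random vectors in ℝ^m with common density f_m, and set R_n = n^{2/m}/(c_m s_{m−1}). For R > 0 let A_n^{[R,∞)} denote the number of indices i ∈ {1,…,n} with ‖X_i‖ ≥ R. Then for all sufficiently large n, P( A_n^{[R_n−1,∞)} < 3 n^{1−2/m} and A_n^{[R_n,∞)} > (1/4) n^{1−2/m} ) > 1/3. -/

import Mathlib

open MeasureTheory ProbabilityTheory Filter Metric
open scoped Classical

/-- The heavy-tailed density `f_m(x) = c / (1 + ‖x‖^{m+1})` on `ℝ^m` (with `c` the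
normalizing constant). -/
noncomputable def heavyDensity (m : ℕ) (c : ℝ) (x : EuclideanSpace ℝ (Fin m)) : ℝ :=
  c / (1 + ‖x‖ ^ (m + 1))

/-- The measure on `ℝ^m` with density `f_m` with respect to Lebesgue measure. -/
noncomputable def heavyMeasure (m : ℕ) (c : ℝ) : Measure (EuclideanSpace ℝ (Fin m)) :=
  volume.withDensity fun x => ENNReal.ofReal (heavyDensity m c x)

/-- `b_m`, the Lebesgue volume of the unit ball in `ℝ^m`. -/
noncomputable def unitBallVol (m : ℕ) : ℝ :=
  (volume (ball (0 : EuclideanSpace ℝ (Fin m)) 1)).toReal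

/-- `s_{m−1}`, the surface measure of the unit sphere in `ℝ^m`, equal to `m · b_m`. -/
noncomputable def unitSphereArea (m : ℕ) : ℝ := m * unitBallVol m

/-- `A_n^{[R,∞)}`: the number of indices `i ∈ {0, …, n−1}` with `‖X_i(ω)‖ ≥ R`. -/
noncomputable def countGE {m : ℕ} {Ω : Type*} (X : ℕ → Ω → EuclideanSpace ℝ (Fin m))
    (n : ℕ) (R : ℝ) (ω : Ω) : ℕ :=
  ((Finset.range n).filter fun i => R ≤ ‖X i ω‖).card



section Aux
open Set


noncomputable def gfun (m : ℕ) : ℝ → ℝ := fun y => y ^ (m - 1) / (1 + y ^ (m + 1))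

lemma gfun_meas (m : ℕ) : Measurable (gfun m) :=
  (measurable_id.pow_const _).div (measurable_const.add (measurable_id.pow_const _))

lemma gfun_nonneg (m : ℕ) {y : ℝ} (hy : 0 ≤ y) : 0 ≤ gfun m y := by
  unfold gfun
  positivity

lemma pow_split {m : ℕ} (hm : 3 ≤ m) (y : ℝ) : y ^ (m + 1) = y ^ (m - 1) * y ^ 2 := by
  rw [← pow_add]
  congr 1
  omega

lemma rpow_neg_two {y : ℝ} (hy : 0 < y) : y ^ (-2 : ℝ) = (y ^ 2)⁻¹ := by
  rw [show (-2 : ℝ) = -((2 : ℕ) : ℝ) by norm_num, Real.rpow_neg hy.le, Real.rpow_natCast]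

lemma gfun_le {m : ℕ} (hm : 3 ≤ m) {y : ℝ} (hy : 0 < y) : gfun m y ≤ y ^ (-2 : ℝ) := by
  rw [rpow_neg_two hy]
  unfold gfun
  rw [div_le_iff₀ (by positivity), pow_split hm]
  have h1 : (0:ℝ) < y ^ (m-1) := by positivity
  have h2 : (0:ℝ) < y ^ 2 := by positivity
  rw [inv_mul_eq_div, le_div_iff₀ h2]
  nlinarith

lemma le_gfun {m : ℕ} (hm : 3 ≤ m) {y : ℝ} (hy : 1 ≤ y) : 2⁻¹ * y ^ (-2 : ℝ) ≤ gfun m y := by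
  have hy0 : (0:ℝ) < y := lt_of_lt_of_le one_pos hy
  rw [rpow_neg_two hy0]
  unfold gfun
  rw [le_div_iff₀ (by positivity), pow_split hm]
  have h1 : (1:ℝ) ≤ y ^ (m-1) := one_le_pow₀ hy
  have h2 : (1:ℝ) ≤ y ^ 2 := one_le_pow₀ hy
  have h3 : (0:ℝ) < y ^ 2 := by positivity
  have key : 1 + y ^ (m-1) * y ^ 2 ≤ 2 * (y ^ (m-1) * y^2) := by nlinarith
  calc 2⁻¹ * (y^2)⁻¹ * (1 + y ^ (m-1) * y^2) ≤ 2⁻¹ * (y^2)⁻¹ * (2 * (y^(m-1)*y^2)) := by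
        apply mul_le_mul_of_nonneg_left key (by positivity)
    _ = y ^ (m-1) := by field_simp

lemma gfun_ge_sub {m : ℕ} (hm : 3 ≤ m) {y : ℝ} (hy : 1 ≤ y) :
    y ^ (-2 : ℝ) - y ^ (-((m : ℝ) + 3)) ≤ gfun m y := by
  have hy0 : (0:ℝ) < y := lt_of_lt_of_le one_pos hy
  have e1 : y ^ (-((m : ℝ) + 3)) = (y ^ (m + 3))⁻¹ := by
    rw [show -((m:ℝ)+3) = -(((m+3 : ℕ)):ℝ) by push_cast; ring, Real.rpow_neg hy0.le,
      Real.rpow_natCast]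
  rw [rpow_neg_two hy0, e1]
  unfold gfun
  have e2 : y ^ (m + 3) = y ^ (m - 1) * y ^ 2 * y ^ 2 := by
    rw [← pow_add, ← pow_add]; congr 1; omega
  have e3 : y ^ (m + 1) = y ^ (m - 1) * y ^ 2 := pow_split hm y
  set B := y ^ (m - 1) with hB
  set A := y ^ 2 with hA
  have hA1 : (1:ℝ) ≤ A := one_le_pow₀ hy
  have hB1 : (1:ℝ) ≤ B := one_le_pow₀ hy
  have hA0 : (0:ℝ) < A := lt_of_lt_of_le one_pos hA1
  have hB0 : (0:ℝ) < B := lt_of_lt_of_le one_pos hB1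
  rw [e2, e3, le_div_iff₀ (by positivity)]
  have expand : (A⁻¹ - (B * A * A)⁻¹) * (1 + B * A) = (B*A*(B*A) - 1) / (B*A*A) := by
    field_simp
    ring
  rw [expand, div_le_iff₀ (by positivity)]
  nlinarith

lemma integrableOn_gfun_Ioi {m : ℕ} (hm : 3 ≤ m) {R : ℝ} (hR : 0 < R) :
    IntegrableOn (gfun m) (Ioi R) := by
  have hb : IntegrableOn (fun y : ℝ => y ^ (-2:ℝ)) (Ioi R) :=
    integrableOn_Ioi_rpow_of_lt (by norm_num) hR
  refine hb.mono' ((gfun_meas m).aestronglyMeasurable.restrict) ?_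
  filter_upwards [ae_restrict_mem measurableSet_Ioi] with y hy
  rw [Real.norm_eq_abs, abs_of_nonneg (gfun_nonneg m (le_of_lt (hR.trans hy)))]
  exact gfun_le hm (hR.trans hy)

lemma integral_rpow_neg_two {R : ℝ} (hR : 0 < R) : ∫ y in Ioi R, y ^ (-2:ℝ) = 1/R := by
  rw [integral_Ioi_rpow_of_lt (by norm_num) hR]
  norm_num [Real.rpow_neg_one]

lemma int_gfun_le {m : ℕ} (hm : 3 ≤ m) {R : ℝ} (hR : 0 < R) :
    ∫ y in Ioi R, gfun m y ≤ 1/R := by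
  rw [← integral_rpow_neg_two hR]
  apply setIntegral_mono_on (integrableOn_gfun_Ioi hm hR)
    (integrableOn_Ioi_rpow_of_lt (by norm_num) hR) measurableSet_Ioi
  intro y hy
  exact gfun_le hm (hR.trans hy)

lemma int_gfun_ge {m : ℕ} (hm : 3 ≤ m) {R : ℝ} (hR : 1 ≤ R) :
    1/(2*R) ≤ ∫ y in Ioi R, gfun m y := by
  have hR0 : (0:ℝ) < R := lt_of_lt_of_le one_pos hR
  have h2 : ∫ y in Ioi R, 2⁻¹ * y ^ (-2:ℝ) = 1/(2*R) := by
    rw [integral_const_mul, integral_rpow_neg_two hR0]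
    field_simp
  rw [← h2]
  apply setIntegral_mono_on
    (((integrableOn_Ioi_rpow_of_lt (by norm_num) hR0)).const_mul _)
    (integrableOn_gfun_Ioi hm hR0) measurableSet_Ioi
  intro y hy
  exact le_gfun hm (hR.trans hy.le)

lemma gfun_le_pow {m : ℕ} {y : ℝ} (hy : 0 ≤ y) : gfun m y ≤ y ^ (m - 1) := by
  unfold gfun
  apply div_le_self (by positivity)
  nlinarith [pow_nonneg hy (m+1)]

lemma integrableOn_gfun_Ioc (m : ℕ) : IntegrableOn (gfun m) (Ioc (0:ℝ) 1) := by
  have hb : IntegrableOn (fun _ : ℝ => (1:ℝ)) (Ioc (0:ℝ) 1) := integrableOn_const (by simp)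
  refine hb.mono' ((gfun_meas m).aestronglyMeasurable.restrict) ?_
  filter_upwards [ae_restrict_mem measurableSet_Ioc] with y hy
  rw [Real.norm_eq_abs, abs_of_nonneg (gfun_nonneg m hy.1.le)]
  calc gfun m y ≤ y ^ (m-1) := gfun_le_pow hy.1.le
    _ ≤ 1 := pow_le_one₀ hy.1.le hy.2

lemma integrableOn_gfun_Ioi0 {m : ℕ} (hm : 3 ≤ m) : IntegrableOn (gfun m) (Ioi (0:ℝ)) := by
  rw [← Ioc_union_Ioi_eq_Ioi (zero_le_one : (0:ℝ) ≤ 1)]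
  exact (integrableOn_gfun_Ioc m).union (integrableOn_gfun_Ioi hm one_pos)

lemma int_gfun_total_le {m : ℕ} (hm : 3 ≤ m) : ∫ y in Ioi (0:ℝ), gfun m y ≤ 4/3 := by
  rw [← Ioc_union_Ioi_eq_Ioi (zero_le_one : (0:ℝ) ≤ 1),
    setIntegral_union (Ioc_disjoint_Ioi le_rfl) measurableSet_Ioi
      (integrableOn_gfun_Ioc m) (integrableOn_gfun_Ioi hm one_pos)]
  have h1 : ∫ y in Ioc (0:ℝ) 1, gfun m y ≤ 1/3 := by
    have hp : ∫ y in Ioc (0:ℝ) 1, y ^ (m-1) = 1/(m : ℝ) := by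
      rw [← intervalIntegral.integral_of_le (zero_le_one : (0:ℝ) ≤ 1),
        integral_pow]
      rw [one_pow, zero_pow (by omega : m - 1 + 1 ≠ 0), Nat.cast_sub (by omega : 1 ≤ m)]
      have hm0 : (m:ℝ) ≠ 0 := by
        have : (3:ℝ) ≤ (m:ℝ) := by exact_mod_cast hm
        intro h; linarith
      field_simp
      simp [hm0]
    have hmono : ∫ y in Ioc (0:ℝ) 1, gfun m y ≤ ∫ y in Ioc (0:ℝ) 1, y ^ (m-1) := by
      apply setIntegral_mono_on (integrableOn_gfun_Ioc m) ?_ measurableSet_Ioc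
      · intro y hy; exact gfun_le_pow hy.1.le
      · exact (intervalIntegral.intervalIntegrable_pow _).1
    have hle : 1/(m:ℝ) ≤ 1/3 := by
      apply div_le_div_of_nonneg_left one_pos.le (by norm_num)
      exact_mod_cast hm
    linarith [hmono, hp ▸ hmono]
  have h2 : ∫ y in Ioi (1:ℝ), gfun m y ≤ 1 := by
    have := int_gfun_le hm (one_pos)
    simpa using this
  linarith

lemma int_gfun_total_ge {m : ℕ} (hm : 3 ≤ m) : 4/5 ≤ ∫ y in Ioi (0:ℝ), gfun m y := by
  have hm3 : (3:ℝ) ≤ (m:ℝ) := by exact_mod_cast hm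
  have step1 : ∫ y in Ioi (1:ℝ), gfun m y ≤ ∫ y in Ioi (0:ℝ), gfun m y := by
    apply setIntegral_mono_set (integrableOn_gfun_Ioi0 hm)
    · filter_upwards [ae_restrict_mem measurableSet_Ioi] with y hy
      exact gfun_nonneg m hy.le
    · exact HasSubset.Subset.eventuallyLE (Ioi_subset_Ioi zero_le_one)
  have hint2 : IntegrableOn (fun y : ℝ => y ^ (-2:ℝ)) (Ioi 1) :=
    integrableOn_Ioi_rpow_of_lt (by norm_num) one_pos
  have hint3 : IntegrableOn (fun y : ℝ => y ^ (-((m:ℝ)+3))) (Ioi 1) := by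
    exact integrableOn_Ioi_rpow_of_lt (by linarith) one_pos
  have hval : ∫ y in Ioi (1:ℝ), (y ^ (-2:ℝ) - y ^ (-((m:ℝ)+3))) = 1 - 1/((m:ℝ)+2) := by
    rw [integral_sub hint2 hint3, integral_rpow_neg_two one_pos,
      integral_Ioi_rpow_of_lt (by linarith) one_pos, Real.one_rpow,
      show -((m:ℝ)+3)+1 = -((m:ℝ)+2) by ring, div_neg, neg_div, neg_neg]
    norm_num
  have step2 : 1 - 1/((m:ℝ)+2) ≤ ∫ y in Ioi (1:ℝ), gfun m y := by
    rw [← hval]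
    apply setIntegral_mono_on (hint2.sub hint3) (integrableOn_gfun_Ioi hm one_pos)
      measurableSet_Ioi
    intro y hy
    exact gfun_ge_sub hm hy.le
  have hm2 : (5:ℝ) ≤ (m:ℝ) + 2 := by
    have : (3:ℝ) ≤ (m:ℝ) := by exact_mod_cast hm
    linarith
  have : 1/((m:ℝ)+2) ≤ 1/5 := by
    apply div_le_div_of_nonneg_left one_pos.le (by norm_num) hm2
  linarith

section Tail

open Metric

variable {m : ℕ} {c : ℝ}

lemma heavyDensity_meas (m : ℕ) (c : ℝ) : Measurable (heavyDensity m c) :=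
  measurable_const.div (measurable_const.add (measurable_norm.pow_const _))

lemma heavyDensity_nonneg (hc : 0 ≤ c) (x : EuclideanSpace ℝ (Fin m)) :
    0 ≤ heavyDensity m c x := by
  unfold heavyDensity; positivity

lemma heavyDensity_integrable (hc : 0 < c) (hprob : IsProbabilityMeasure (heavyMeasure m c)) :
    Integrable (heavyDensity m c) (volume : Measure (EuclideanSpace ℝ (Fin m))) := by
  refine ⟨(heavyDensity_meas m c).aestronglyMeasurable, ?_⟩
  rw [hasFiniteIntegral_iff_ofReal (Filter.Eventually.of_forall
    fun x => heavyDensity_nonneg hc.le x)]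
  have h1 : (heavyMeasure m c) Set.univ = 1 := measure_univ
  rw [heavyMeasure, withDensity_apply _ MeasurableSet.univ, Measure.restrict_univ] at h1
  rw [h1]
  exact ENNReal.one_lt_top

lemma measurableSet_tail (m : ℕ) (R : ℝ) :
    MeasurableSet {x : EuclideanSpace ℝ (Fin m) | R ≤ ‖x‖} :=
  measurable_norm measurableSet_Ici

lemma tail_eq (hm : 3 ≤ m) (hc : 0 < c)
    (hint : Integrable (heavyDensity m c) (volume : Measure (EuclideanSpace ℝ (Fin m))))
    {R : ℝ} (hR : 0 ≤ R) :
    (heavyMeasure m c {x : EuclideanSpace ℝ (Fin m) | R ≤ ‖x‖}).toReal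
      = ((m : ℝ) * unitBallVol m * c) * ∫ y in Ioi R, gfun m y := by
  haveI : Nontrivial (EuclideanSpace ℝ (Fin m)) :=
    Module.nontrivial_of_finrank_pos (R := ℝ)
      (by rw [finrank_euclideanSpace_fin]; omega)
  set A : Set (EuclideanSpace ℝ (Fin m)) := {x | R ≤ ‖x‖} with hAdef
  have hA : MeasurableSet A := measurableSet_tail m R
  -- step 1-2: toReal of measure = set integral of the density
  have h12 : (heavyMeasure m c A).toReal = ∫ x in A, heavyDensity m c x := by
    rw [heavyMeasure, withDensity_apply _ hA,
      ← ofReal_integral_eq_lintegral_ofReal hint.integrableOn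
        (Filter.Eventually.of_forall fun x => heavyDensity_nonneg hc.le x),
      ENNReal.toReal_ofReal]
    exact integral_nonneg fun x => heavyDensity_nonneg hc.le x
  -- step 3: as integral over the whole space of a radial function
  set f : ℝ → ℝ := (Ici R).indicator (fun r => c / (1 + r ^ (m + 1))) with hfdef
  have h3 : ∫ x in A, heavyDensity m c x = ∫ x : EuclideanSpace ℝ (Fin m), f ‖x‖ := by
    rw [← integral_indicator hA]
    refine integral_congr_ae (Filter.Eventually.of_forall fun x => ?_)
    by_cases h : R ≤ ‖x‖ <;>
      simp [hfdef, Set.indicator, h, hAdef, heavyDensity]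
  -- step 4: polar coordinates
  have h4 : ∫ x : EuclideanSpace ℝ (Fin m), f ‖x‖
      = (m : ℝ) * ((volume (ball (0 : EuclideanSpace ℝ (Fin m)) 1)).toReal
          * ∫ y in Ioi (0:ℝ), y ^ (m - 1) * f y) := by
    have := integral_fun_norm_addHaar (volume : Measure (EuclideanSpace ℝ (Fin m))) f
    rw [finrank_euclideanSpace_fin] at this
    simpa [nsmul_eq_mul, smul_eq_mul, mul_assoc, measureReal_def] using this
  -- step 5: reduce to an integral over Ioi R
  have h5 : ∫ y in Ioi (0:ℝ), y ^ (m - 1) * f y = c * ∫ y in Ioi R, gfun m y := by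
    have e1 : (fun y : ℝ => y ^ (m - 1) * f y)
        = (Ici R).indicator (fun y => c * gfun m y) := by
      funext y
      by_cases h : y ∈ Ici R
      · rw [hfdef, Set.indicator_of_mem h, Set.indicator_of_mem h]
        simp only [gfun, div_eq_mul_inv]
        ring
      · rw [hfdef, Set.indicator_of_notMem h, Set.indicator_of_notMem h, mul_zero]
    rw [e1, integral_indicator measurableSet_Ici, Measure.restrict_restrict measurableSet_Ici]
    have hset : (Ici R ∩ Ioi 0 : Set ℝ) =ᵐ[volume] Ioi R := by
      rw [Filter.eventuallyEq_set]
      have hsing : ∀ᵐ y : ℝ, y ≠ R := by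
        simpa [ae_iff] using Real.volume_singleton (x := R)
      filter_upwards [hsing] with y hy
      simp only [mem_inter_iff, mem_Ici, mem_Ioi]
      constructor
      · rintro ⟨h1, _⟩
        exact lt_of_le_of_ne h1 (Ne.symm hy)
      · intro h1
        exact ⟨h1.le, lt_of_le_of_lt hR h1⟩
    rw [setIntegral_congr_set hset, integral_const_mul]
  rw [h12, h3, h4, h5]
  unfold unitBallVol
  ring

end Tail

lemma norm_identity (hm : 3 ≤ m) (hc : 0 < c) (hprob : IsProbabilityMeasure (heavyMeasure m c)) :
    (c * unitSphereArea m) * ∫ y in Ioi (0:ℝ), gfun m y = 1 := by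
  have huniv : {x : EuclideanSpace ℝ (Fin m) | (0:ℝ) ≤ ‖x‖} = Set.univ :=
    Set.eq_univ_iff_forall.2 fun x => norm_nonneg x
  have := tail_eq hm hc (heavyDensity_integrable hc hprob) (le_refl (0:ℝ))
  rw [huniv, measure_univ, ENNReal.toReal_one] at this
  rw [unitSphereArea]
  linarith [this]

lemma sigma_bounds (hm : 3 ≤ m) (hc : 0 < c)
    (hprob : IsProbabilityMeasure (heavyMeasure m c)) :
    3/4 ≤ c * unitSphereArea m ∧ c * unitSphereArea m ≤ 5/4 := by
  have hid := norm_identity hm hc hprob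
  have hle := int_gfun_total_le hm
  have hge := int_gfun_total_ge hm
  set σ := c * unitSphereArea m
  set I := ∫ y in Ioi (0:ℝ), gfun m y
  have hI0 : 0 < I := by linarith
  have hσ0 : 0 < σ := by
    rcases lt_trichotomy σ 0 with h | h | h
    · nlinarith
    · rw [h] at hid; simp at hid
    · exact h
  constructor
  · nlinarith
  · nlinarith

lemma tail_bounds (hm : 3 ≤ m) (hc : 0 < c)
    (hprob : IsProbabilityMeasure (heavyMeasure m c)) {R : ℝ} (hR : 1 ≤ R) :
    (c * unitSphereArea m)/(2*R)
        ≤ (heavyMeasure m c {x : EuclideanSpace ℝ (Fin m) | R ≤ ‖x‖}).toReal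
      ∧ (heavyMeasure m c {x : EuclideanSpace ℝ (Fin m) | R ≤ ‖x‖}).toReal
        ≤ (c * unitSphereArea m)/R := by
  have hR0 : (0:ℝ) < R := lt_of_lt_of_le one_pos hR
  have heq := tail_eq hm hc (heavyDensity_integrable hc hprob) hR0.le
  have hconst : (m : ℝ) * unitBallVol m * c = c * unitSphereArea m := by
    rw [unitSphereArea]; ring
  rw [hconst] at heq
  have hσ0 : 0 < c * unitSphereArea m := lt_of_lt_of_le (by norm_num)
    (sigma_bounds hm hc hprob).1
  have hJle := int_gfun_le hm hR0
  have hJge := int_gfun_ge hm hR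
  rw [heq]
  constructor
  · calc (c * unitSphereArea m)/(2*R) = (c * unitSphereArea m) * (1/(2*R)) := by ring
      _ ≤ (c * unitSphereArea m) * ∫ y in Ioi R, gfun m y :=
        mul_le_mul_of_nonneg_left hJge hσ0.le
  · calc (c * unitSphereArea m) * ∫ y in Ioi R, gfun m y
        ≤ (c * unitSphereArea m) * (1/R) := mul_le_mul_of_nonneg_left hJle hσ0.le
      _ = (c * unitSphereArea m)/R := by ring


end Aux

section Cheb

variable {m : ℕ} {c : ℝ} {Ω : Type*} [MeasureSpace Ω] [IsProbabilityMeasure (ℙ : Measure Ω)]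

lemma countGE_eq_sum (X : ℕ → Ω → EuclideanSpace ℝ (Fin m)) (n : ℕ) (R : ℝ) (ω : Ω) :
    ((countGE X n R ω : ℝ)) = ∑ i ∈ Finset.range n,
      ({x : EuclideanSpace ℝ (Fin m) | R ≤ ‖x‖}).indicator (fun _ => (1:ℝ)) (X i ω) := by
  rw [countGE, Finset.card_filter, Nat.cast_sum]
  refine Finset.sum_congr rfl fun i _ => ?_
  by_cases h : R ≤ ‖X i ω‖ <;> simp [Set.indicator, h]

lemma countGE_measurable (X : ℕ → Ω → EuclideanSpace ℝ (Fin m))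
    (hmeas : ∀ i, Measurable (X i)) (n : ℕ) (R : ℝ) :
    Measurable fun ω => (countGE X n R ω : ℝ) := by
  have : (fun ω => (countGE X n R ω : ℝ)) = fun ω => ∑ i ∈ Finset.range n,
      ({x : EuclideanSpace ℝ (Fin m) | R ≤ ‖x‖}).indicator (fun _ => (1:ℝ)) (X i ω) := by
    funext ω; exact countGE_eq_sum X n R ω
  rw [this]
  apply Finset.measurable_sum
  intro i _
  exact (measurable_const.indicator (measurableSet_tail m R)).comp (hmeas i)

lemma count_cheb (hc : 0 < c)
    (X : ℕ → Ω → EuclideanSpace ℝ (Fin m)) (hmeas : ∀ i, Measurable (X i))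
    (hindep : iIndepFun X ℙ)
    (hlaw : ∀ i, Measure.map (X i) ℙ = heavyMeasure m c)
    (n : ℕ) (R t : ℝ) (ht : 0 < t) :
    ℙ {ω | t ≤ |(countGE X n R ω : ℝ)
        - n * (heavyMeasure m c {x : EuclideanSpace ℝ (Fin m) | R ≤ ‖x‖}).toReal|}
      ≤ ENNReal.ofReal
        ((n * (heavyMeasure m c {x : EuclideanSpace ℝ (Fin m) | R ≤ ‖x‖}).toReal) / t ^ 2) := by
  classical
  set A : Set (EuclideanSpace ℝ (Fin m)) := {x | R ≤ ‖x‖} with hAdef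
  have hA : MeasurableSet A := measurableSet_tail m R
  set p : ℝ := (heavyMeasure m c A).toReal with hpdef
  have hp0 : 0 ≤ p := ENNReal.toReal_nonneg
  set φ : EuclideanSpace ℝ (Fin m) → ℝ := A.indicator (fun _ => (1:ℝ)) with hφdef
  have mφ : Measurable φ := measurable_const.indicator hA
  set Y : ℕ → Ω → ℝ := fun i => φ ∘ X i with hYdef
  have hYind : ∀ i, Y i = (X i ⁻¹' A).indicator (fun _ => (1:ℝ)) := by
    intro i; funext ω
    by_cases h : X i ω ∈ A <;>
      simp [hYdef, hφdef, Set.indicator, Function.comp, h, Set.mem_preimage]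
  have hmemY : ∀ i, MemLp (Y i) 2 ℙ := by
    intro i
    rw [hYind i]
    exact memLp_indicator_const 2 ((hmeas i) hA) 1 (Or.inr (measure_ne_top _ _))
  have hpre : ∀ i, ℙ (X i ⁻¹' A) = heavyMeasure m c A := fun i => by
    rw [← hlaw i, Measure.map_apply (hmeas i) hA]
  have hEY : ∀ i, ∫ ω, Y i ω ∂ℙ = p := by
    intro i
    rw [hYind i, integral_indicator_const (1:ℝ) ((hmeas i) hA), measureReal_def, hpre i, smul_eq_mul, mul_one]
  have hYsq : ∀ i, (Y i) ^ 2 = Y i := by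
    intro i
    funext ω
    by_cases h : X i ω ∈ A <;> simp [hYdef, hφdef, Set.indicator, Function.comp, h]
  have hVarY : ∀ i, variance (Y i) ℙ ≤ p := by
    intro i
    rw [variance_eq_sub (hmemY i), hYsq i]
    have := hEY i
    simp only [this]
    nlinarith [sq_nonneg p]
  have hpair : Set.Pairwise ↑(Finset.range n) fun i j => IndepFun (Y i) (Y j) ℙ :=
    fun i _ j _ hij => (hindep.indepFun hij).comp mφ mφ
  have hmemS : MemLp (∑ i ∈ Finset.range n, Y i) 2 ℙ :=
    memLp_finset_sum' _ fun i _ => hmemY i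
  have hES : ∫ ω, (∑ i ∈ Finset.range n, Y i) ω ∂ℙ = n * p := by
    simp_rw [Finset.sum_apply]
    rw [integral_finset_sum _ fun i _ => (hmemY i).integrable one_le_two]
    simp_rw [hEY]
    simp [Finset.sum_const, Finset.card_range, nsmul_eq_mul]
  have hVarS : variance (∑ i ∈ Finset.range n, Y i) ℙ ≤ n * p := by
    rw [IndepFun.variance_sum (fun i _ => hmemY i) hpair]
    calc ∑ i ∈ Finset.range n, variance (Y i) ℙ ≤ ∑ _i ∈ Finset.range n, p :=
          Finset.sum_le_sum fun i _ => hVarY i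
      _ = n * p := by simp [Finset.sum_const, Finset.card_range, nsmul_eq_mul]
  have hcheb := meas_ge_le_variance_div_sq (μ := ℙ) hmemS ht
  have hseteq : {ω | t ≤ |(countGE X n R ω : ℝ) - n * p|}
      = {ω | t ≤ |(∑ i ∈ Finset.range n, Y i) ω - ∫ ω', (∑ i ∈ Finset.range n, Y i) ω' ∂ℙ|} := by
    have hES2 : ∫ ω', ∑ i ∈ Finset.range n,
        ({x : EuclideanSpace ℝ (Fin m) | R ≤ ‖x‖}).indicator (fun _ => (1:ℝ)) (X i ω') ∂ℙ
        = n * p := by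
      simpa [Finset.sum_apply, hYdef, hφdef, Function.comp] using hES
    ext ω
    simp only [Set.mem_setOf_eq, Finset.sum_apply, countGE_eq_sum X n R ω, hYdef, hφdef,
      Function.comp, hAdef, hES2]
  rw [hseteq]
  refine le_trans hcheb (ENNReal.ofReal_le_ofReal ?_)
  exact div_le_div_of_nonneg_right hVarS (by positivity) |>.trans_eq rfl

end Cheb

set_option maxHeartbeats 2000000 in
/-- For i.i.d. samples from the heavy-tailed density `f_m` (`m ≥ 3`) and
`R_n = n^{2/m}/(c_m s_{m−1})`, for all sufficiently large `n`,
`P(A_n^{[R_n−1,∞)} < 3 n^{1−2/m} and A_n^{[R_n,∞)} > (1/4) n^{1−2/m}) > 1/3`. -/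
theorem prob_point_counts_gt_third {m : ℕ} (hm : 3 ≤ m) {c : ℝ} (hc : 0 < c)
    (hprob : IsProbabilityMeasure (heavyMeasure m c))
    {Ω : Type*} [MeasureSpace Ω] [IsProbabilityMeasure (ℙ : Measure Ω)]
    (X : ℕ → Ω → EuclideanSpace ℝ (Fin m)) (hmeas : ∀ i, Measurable (X i))
    (hindep : iIndepFun X ℙ)
    (hlaw : ∀ i, Measure.map (X i) ℙ = heavyMeasure m c)
    (R : ℕ → ℝ) (hR : ∀ n, R n = (n : ℝ) ^ ((2 : ℝ) / m) / (c * unitSphereArea m)) :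
    ∀ᶠ n : ℕ in atTop,
      (1 : ℝ) / 3 < (ℙ {ω | (countGE X n (R n - 1) ω : ℝ) < 3 * (n : ℝ) ^ (1 - (2 : ℝ) / m)
        ∧ (n : ℝ) ^ (1 - (2 : ℝ) / m) / 4 < (countGE X n (R n) ω : ℝ)}).toReal := by
  have hm3 : (3:ℝ) ≤ (m:ℝ) := by exact_mod_cast hm
  obtain ⟨hσl, hσu⟩ := sigma_bounds hm hc hprob
  set σ := c * unitSphereArea m with hσdef
  have hσ0 : (0:ℝ) < σ := lt_of_lt_of_le (by norm_num) hσl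
  have hexp1 : 0 < (2:ℝ)/m := by positivity
  have hexp2 : 0 < 1 - (2:ℝ)/m := by
    have h23 : (2:ℝ)/m ≤ 2/3 := by
      apply div_le_div_of_nonneg_left (by norm_num) (by norm_num) hm3
    linarith
  have hRt : Tendsto R atTop atTop := by
    have h1 : Tendsto (fun n : ℕ => ((n:ℝ)) ^ ((2:ℝ)/m)) atTop atTop :=
      (tendsto_rpow_atTop hexp1).comp tendsto_natCast_atTop_atTop
    have h2 : Tendsto (fun n : ℕ => ((n:ℝ)) ^ ((2:ℝ)/m) / σ) atTop atTop :=
      h1.atTop_div_const hσ0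
    have heq : R = fun n : ℕ => ((n:ℝ)) ^ ((2:ℝ)/m) / σ := funext fun n => hR n
    rwa [heq]
  have hat : Tendsto (fun n : ℕ => ((n:ℝ)) ^ (1 - (2:ℝ)/m)) atTop atTop :=
    (tendsto_rpow_atTop hexp2).comp tendsto_natCast_atTop_atTop
  filter_upwards [hRt.eventually_ge_atTop 5, hat.eventually_ge_atTop 2500,
    eventually_ge_atTop 1] with n hn5 hna hn1
  set a : ℝ := (n:ℝ) ^ (1 - (2:ℝ)/m) with hadef
  have ha : (2500:ℝ) ≤ a := hna
  have ha0 : (0:ℝ) < a := by linarith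
  have hnpos : (0:ℝ) < (n:ℝ) := by exact_mod_cast hn1
  have hnr : (0:ℝ) < (n:ℝ)^((2:ℝ)/m) := Real.rpow_pos_of_pos hnpos _
  have hRn : R n = (n:ℝ)^((2:ℝ)/m) / σ := hR n
  have hRpos : (0:ℝ) < R n := by rw [hRn]; positivity
  have hasplit : a = (n:ℝ) / (n:ℝ)^((2:ℝ)/m) := by
    rw [hadef, Real.rpow_sub hnpos, Real.rpow_one]
  obtain ⟨hp1l, hp1u⟩ := tail_bounds hm hc hprob (R := R n) (by linarith)
  obtain ⟨hp0l, hp0u⟩ := tail_bounds hm hc hprob (R := R n - 1) (by linarith)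
  have hcheb1 := count_cheb hc X hmeas hindep hlaw n (R n) (a/32) (by linarith)
  have hcheb0 := count_cheb hc X hmeas hindep hlaw n (R n - 1) a (by linarith)
  set q1 : ℝ := (heavyMeasure m c {x : EuclideanSpace ℝ (Fin m) | R n ≤ ‖x‖}).toReal with hq1
  set q0 : ℝ :=
    (heavyMeasure m c {x : EuclideanSpace ℝ (Fin m) | R n - 1 ≤ ‖x‖}).toReal with hq0
  -- expectation bounds
  have e1 : (n:ℝ) * (σ/(2*R n)) = σ^2/2 * a := by
    rw [hRn, hasplit]; field_simp
  have e2 : (n:ℝ) * (σ/R n) = σ^2 * a := by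
    rw [hRn, hasplit]; field_simp
  have e3 : (n:ℝ) * (σ/((4/5)*R n)) = 5/4*σ^2 * a := by
    rw [hRn, hasplit]; field_simp
  have hσsql : (9:ℝ)/16 ≤ σ^2 := by nlinarith
  have hσsqu : σ^2 ≤ (25:ℝ)/16 := by nlinarith
  have h1l : 9/32 * a ≤ (n:ℝ) * q1 := by
    have h := mul_le_mul_of_nonneg_left hp1l hnpos.le
    rw [e1] at h
    nlinarith
  have h1u : (n:ℝ) * q1 ≤ 25/16 * a := by
    have h := mul_le_mul_of_nonneg_left hp1u hnpos.le
    rw [e2] at h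
    nlinarith
  have h0u : (n:ℝ) * q0 ≤ 2 * a := by
    have hge : (4/5)*R n ≤ R n - 1 := by linarith
    have hd : σ/(R n - 1) ≤ σ/((4/5)*R n) :=
      div_le_div_of_nonneg_left hσ0.le (by linarith) hge
    have h := mul_le_mul_of_nonneg_left (hp0u.trans hd) hnpos.le
    rw [e3] at h
    nlinarith
  have hq0nn : (0:ℝ) ≤ (n:ℝ) * q0 := by positivity
  have hq1nn : (0:ℝ) ≤ (n:ℝ) * q1 := by positivity
  -- the good event
  set G : Set Ω := {ω | (countGE X n (R n - 1) ω : ℝ) < 3 * a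
    ∧ a / 4 < (countGE X n (R n) ω : ℝ)} with hGdef
  have hGmeas : MeasurableSet G :=
    (measurableSet_lt (countGE_measurable X hmeas n (R n - 1)) measurable_const).inter
      (measurableSet_lt measurable_const (countGE_measurable X hmeas n (R n)))
  have hsub : Gᶜ ⊆ {ω | a ≤ |(countGE X n (R n - 1) ω : ℝ) - n * q0|}
      ∪ {ω | a/32 ≤ |(countGE X n (R n) ω : ℝ) - n * q1|} := by
    intro ω hω
    simp only [hGdef, Set.mem_compl_iff, Set.mem_setOf_eq, not_and_or, not_lt] at hω
    rcases hω with h | h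
    · left
      have hx : a ≤ (countGE X n (R n - 1) ω : ℝ) - n * q0 := by linarith
      exact hx.trans (le_abs_self _)
    · right
      have hx : a/32 ≤ n * q1 - (countGE X n (R n) ω : ℝ) := by linarith
      calc a/32 ≤ n * q1 - (countGE X n (R n) ω : ℝ) := hx
        _ ≤ |n * q1 - (countGE X n (R n) ω : ℝ)| := le_abs_self _
        _ = |(countGE X n (R n) ω : ℝ) - n * q1| := abs_sub_comm _ _
  have hbad : ℙ Gᶜ ≤ ENNReal.ofReal (1602/a) := by
    calc ℙ Gᶜ ≤ ℙ ({ω | a ≤ |(countGE X n (R n - 1) ω : ℝ) - n * q0|}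
          ∪ {ω | a/32 ≤ |(countGE X n (R n) ω : ℝ) - n * q1|}) := measure_mono hsub
      _ ≤ ℙ {ω | a ≤ |(countGE X n (R n - 1) ω : ℝ) - n * q0|}
          + ℙ {ω | a/32 ≤ |(countGE X n (R n) ω : ℝ) - n * q1|} := measure_union_le _ _
      _ ≤ ENNReal.ofReal ((n * q0)/a^2) + ENNReal.ofReal ((n * q1)/(a/32)^2) :=
          add_le_add hcheb0 hcheb1
      _ ≤ ENNReal.ofReal (2/a) + ENNReal.ofReal (1600/a) := by
          apply add_le_add <;> apply ENNReal.ofReal_le_ofReal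
          · rw [div_le_div_iff₀ (by positivity) (by positivity)]
            nlinarith
          · rw [div_le_div_iff₀ (by positivity) (by positivity)]
            nlinarith
      _ = ENNReal.ofReal (1602/a) := by
          rw [← ENNReal.ofReal_add (by positivity) (by positivity)]
          congr 1
          field_simp
          ring
  have hbadR : (ℙ Gᶜ).toReal ≤ 1602/a := by
    have := ENNReal.toReal_mono ENNReal.ofReal_ne_top hbad
    rwa [ENNReal.toReal_ofReal (by positivity)] at this
  have hsum : (ℙ G).toReal + (ℙ Gᶜ).toReal = 1 := by
    rw [← ENNReal.toReal_add (measure_ne_top _ _) (measure_ne_top _ _),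
      prob_add_prob_compl hGmeas, ENNReal.toReal_one]
  have hfrac : (1602:ℝ)/a < 2/3 := by
    have h1 : (1602:ℝ)/a ≤ 1602/2500 :=
      div_le_div_of_nonneg_left (by norm_num) (by norm_num) ha
    have h2 : (1602:ℝ)/2500 < 2/3 := by norm_num
    linarith
  linarith
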